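/- Let a ∈ ℤ and b : Fin 8 → ℤ satisfy b_i ≥ 0 for all i, ∑_i b_i = 3a − 2 and ∑_i b_i² = a². Then either a = 1 and the class (a,b) equals l − e_i for some i (i.e. b_i = 1 for exactly one index i and b_j = 0 for j ≠ i), or there exist exceptional classes ξ₁, ξ₂ ∈ E_8 with ξ₁ + ξ₂ = (a, b). -/
import Mathlib


/-- The set `E₈` of exceptional classes in `Λ₈ = ℤ × (Fin 8 → ℤ)`:
classes `ξ = (d, m)` with `d² - ∑ mᵢ² = -1` and `3d - ∑ mᵢ = 1`. -/
def E8 : Set (ℤ × (Fin 8 → ℤ)) :=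
  {p | p.1 ^ 2 - ∑ i, (p.2 i) ^ 2 = -1 ∧ 3 * p.1 - ∑ i, p.2 i = 1}

open Finset in
-- workhorse: sum of a two-case function
lemma sum_if1 (p : Fin 8) (f h : Fin 8 → ℤ) :
    ∑ i, (if i = p then f i else h i) = f p + ((∑ i, h i) - h p) := by
  have key : ∀ i, (if i = p then f i else h i)
      = h i + (if i = p then f i - h i else 0) := by
    intro i
    rcases eq_or_ne i p with rfl | h1
    · rw [if_pos rfl, if_pos rfl]; ring
    · rw [if_neg h1, if_neg h1]; ring
  rw [Finset.sum_congr rfl fun i _ => key i, Finset.sum_add_distrib,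
    Finset.sum_ite_eq']
  simp; ring

lemma sum_if2 (p q : Fin 8) (hpq : p ≠ q) (f g h : Fin 8 → ℤ) :
    ∑ i, (if i = p then f i else if i = q then g i else h i)
      = f p + g q + ((∑ i, h i) - h p - h q) := by
  have key : ∀ i, (if i = p then f i else if i = q then g i else h i)
      = h i + ((if i = p then f i - h i else 0) + (if i = q then g i - h i else 0)) := by
    intro i
    rcases eq_or_ne i p with rfl | h1
    · rw [if_pos rfl, if_pos rfl, if_neg hpq]; ring
    · rw [if_neg h1, if_neg h1]
      rcases eq_or_ne i q with rfl | h2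
      · rw [if_pos rfl, if_pos rfl]; ring
      · rw [if_neg h2, if_neg h2]; ring
  rw [Finset.sum_congr rfl fun i _ => key i, Finset.sum_add_distrib,
    Finset.sum_add_distrib, Finset.sum_ite_eq', Finset.sum_ite_eq']
  simp; ring

-- double-sum identity
lemma dsum (b : Fin 8 → ℤ) :
    ∑ i, ∑ j, (b i - b j)^2 = 16 * (∑ i, (b i)^2) - 2 * (∑ i, b i)^2 := by
  simp only [Fin.sum_univ_eight]
  ring

open Finset in
lemma construct (a d : ℤ) (b m : Fin 8 → ℤ)
    (h1 : ∑ i, b i = 3 * a - 2) (h2 : ∑ i, (b i) ^ 2 = a ^ 2)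
    (hm1 : ∑ i, m i = 3 * d - 1) (hm2 : ∑ i, (m i) ^ 2 = d ^ 2 + 1)
    (hdot : ∑ i, b i * m i = a * d) :
    ∃ ξ₁ ∈ E8, ∃ ξ₂ ∈ E8, ξ₁ + ξ₂ = ((a, b) : ℤ × (Fin 8 → ℤ)) := by
  have expand1 : ∑ i, (b i - m i) = (∑ i, b i) - ∑ i, m i := by
    simp only [Fin.sum_univ_eight]; ring
  have expand2 : ∑ i, (b i - m i)^2
      = (∑ i, (b i)^2) - 2 * (∑ i, b i * m i) + ∑ i, (m i)^2 := by
    simp only [Fin.sum_univ_eight]; ring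
  refine ⟨(d, m), ⟨by rw [show d^2 - (∑ i, (m i)^2) = -1 ↔ (∑ i, (m i)^2) = d^2+1 by constructor <;> intro h <;> linarith]; exact hm2, by rw [show 3*d - (∑ i, m i) = 1 ↔ (∑ i, m i) = 3*d-1 by constructor <;> intro h <;> linarith]; exact hm1⟩,
    (a - d, fun i => b i - m i), ⟨?_, ?_⟩, ?_⟩
  · show (a - d)^2 - (∑ i, (b i - m i)^2) = -1
    rw [expand2, h2, hdot, hm2]; ring
  · show 3 * (a - d) - (∑ i, (b i - m i)) = 1
    rw [expand1, h1, hm1]; ring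
  · refine Prod.ext ?_ ?_
    · show d + (a - d) = a; ring
    · funext i
      show m i + (b i - m i) = b i
      ring

open Finset in
lemma caseA (a : ℤ) (b : Fin 8 → ℤ)
    (h1 : ∑ i, b i = 3 * a - 2) (h2 : ∑ i, (b i) ^ 2 = a ^ 2)
    (j : Fin 8) (hj : b j = 0) :
    ∃ ξ₁ ∈ E8, ∃ ξ₂ ∈ E8, ξ₁ + ξ₂ = ((a, b) : ℤ × (Fin 8 → ℤ)) := by
  apply construct a 0 b (fun i => if i = j then -1 else 0) h1 h2
  · rw [sum_if1 j (fun _ => (-1:ℤ)) (fun _ => 0)]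
    simp
  · have pt : ∀ i, ((fun i => if i = j then (-1:ℤ) else 0) i)^2
        = (fun i => if i = j then (1:ℤ) else 0) i := by
      intro i; simp only; split_ifs <;> norm_num
    rw [Finset.sum_congr rfl fun i _ => pt i, sum_if1 j (fun _ => (1:ℤ)) (fun _ => 0)]
    simp
  · have pt : ∀ i, b i * ((fun i => if i = j then (-1:ℤ) else 0) i)
        = (fun i => if i = j then -(b i) else 0) i := by
      intro i; simp only; split_ifs <;> ring
    rw [Finset.sum_congr rfl fun i _ => pt i, sum_if1 j (fun i => -(b i)) (fun _ => 0)]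
    simp [hj]

lemma caseC (a : ℤ) (b : Fin 8 → ℤ)
    (h1 : ∑ i, b i = 3 * a - 2) (h2 : ∑ i, (b i) ^ 2 = a ^ 2)
    (k j : Fin 8) (hkj : k ≠ j) (hb2 : b k = b j + 2) :
    ∃ ξ₁ ∈ E8, ∃ ξ₂ ∈ E8, ξ₁ + ξ₂ = ((a, b) : ℤ × (Fin 8 → ℤ)) := by
  apply construct a 3 b (fun i => if i = k then 2 else if i = j then 0 else 1) h1 h2
  · rw [sum_if2 k j hkj (fun _ => (2:ℤ)) (fun _ => 0) (fun _ => 1)]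
    simp only [Fin.sum_univ_eight]; norm_num
  · have pt : ∀ i, ((fun i => if i = k then (2:ℤ) else if i = j then 0 else 1) i)^2
        = (fun i => if i = k then (4:ℤ) else if i = j then 0 else 1) i := by
      intro i; simp only; split_ifs <;> norm_num
    rw [Finset.sum_congr rfl fun i _ => pt i,
      sum_if2 k j hkj (fun _ => (4:ℤ)) (fun _ => 0) (fun _ => 1)]
    simp only [Fin.sum_univ_eight]; norm_num
  · have pt : ∀ i, b i * ((fun i => if i = k then (2:ℤ) else if i = j then 0 else 1) i)
        = (fun i => if i = k then 2 * b i else if i = j then 0 else b i) i := by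
      intro i; simp only; split_ifs <;> ring
    rw [Finset.sum_congr rfl fun i _ => pt i,
      sum_if2 k j hkj (fun i => 2 * b i) (fun _ => 0) b]
    rw [h1]; linarith

lemma caseE (a : ℤ) (b : Fin 8 → ℤ)
    (h1 : ∑ i, b i = 3 * a - 2) (h2 : ∑ i, (b i) ^ 2 = a ^ 2)
    (p q : Fin 8) (hpq : p ≠ q) (hsum : b p + b q = a - 4) :
    ∃ ξ₁ ∈ E8, ∃ ξ₂ ∈ E8, ξ₁ + ξ₂ = ((a, b) : ℤ × (Fin 8 → ℤ)) := by
  apply construct a 5 b (fun i => if i = p then 1 else if i = q then 1 else 2) h1 h2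
  · rw [sum_if2 p q hpq (fun _ => (1:ℤ)) (fun _ => 1) (fun _ => 2)]
    simp only [Fin.sum_univ_eight]; norm_num
  · have pt : ∀ i, ((fun i => if i = p then (1:ℤ) else if i = q then 1 else 2) i)^2
        = (fun i => if i = p then (1:ℤ) else if i = q then 1 else 4) i := by
      intro i; simp only; split_ifs <;> norm_num
    rw [Finset.sum_congr rfl fun i _ => pt i,
      sum_if2 p q hpq (fun _ => (1:ℤ)) (fun _ => 1) (fun _ => 4)]
    simp only [Fin.sum_univ_eight]; norm_num
  · have pt : ∀ i, b i * ((fun i => if i = p then (1:ℤ) else if i = q then 1 else 2) i)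
        = (fun i => if i = p then b i else if i = q then b i else 2 * b i) i := by
      intro i; simp only; split_ifs <;> ring
    rw [Finset.sum_congr rfl fun i _ => pt i,
      sum_if2 p q hpq b b (fun i => 2 * b i)]
    have : ∑ i, 2 * b i = 2 * ∑ i, b i := by
      simp only [Fin.sum_univ_eight]; ring
    rw [this, h1]; linarith

lemma arith (a v k : ℤ) (hv1 : 1 ≤ v) (hv3 : v ≤ 3) (hk0 : 0 ≤ k) (hk7 : k ≤ 7)
    (e1 : 8 * v + k = 3 * a - 2) (e2 : 8 * v ^ 2 + (2 * v + 1) * k = a ^ 2) :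
    (a = 10 ∧ v = 3 ∧ k = 4) ∨ (a = 11 ∧ v = 3 ∧ k = 7) := by
  have e2' : 8 * v * v + 2 * v * k + k = a * a := by linear_combination e2
  have ha4 : 4 ≤ a := by omega
  have ha11 : a ≤ 11 := by omega
  clear e2
  interval_cases v <;> interval_cases a <;> omega

open Finset in
lemma keyPair (a : ℤ) (b : Fin 8 → ℤ)
    (hb : ∀ i, 0 ≤ b i)
    (h1 : ∑ i, b i = 3 * a - 2) (h2 : ∑ i, (b i) ^ 2 = a ^ 2)
    (hA : ∀ j, b j ≠ 0)
    (hC : ¬ ∃ k j, k ≠ j ∧ b k = b j + 2) :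
    (∃ p q, p ≠ q ∧ b p + b q = a - 4) := by
  -- total identity
  have hdsum := dsum b
  rw [h1, h2] at hdsum
  -- min index
  obtain ⟨i₀, -, hi₀⟩ := Finset.exists_min_image Finset.univ b ⟨0, Finset.mem_univ 0⟩
  have hmin : ∀ i, b i₀ ≤ b i := fun i => hi₀ i (Finset.mem_univ i)
  have hv1 : 1 ≤ b i₀ := by have := hb i₀; have := hA i₀; omega
  -- a ≤ 11
  have htot0 : (0:ℤ) ≤ ∑ i, ∑ j, (b i - b j)^2 :=
    Finset.sum_nonneg fun i _ => Finset.sum_nonneg fun j _ => sq_nonneg _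
  have ha11 : a ≤ 11 := by nlinarith [sq_nonneg (a - 12)]
  have hv3 : b i₀ ≤ 3 := by
    have h8 : ∑ _i : Fin 8, b i₀ ≤ ∑ i, b i := Finset.sum_le_sum fun i _ => hmin i
    rw [h1] at h8
    simp only [Finset.sum_const, Finset.card_univ, Fintype.card_fin, nsmul_eq_mul] at h8
    push_cast at h8
    omega
  -- all values are v or v+1
  have hS : ∀ i, b i ≤ b i₀ + 1 := by
    by_contra hcon
    push_neg at hcon
    obtain ⟨i₁, hi₁⟩ := hcon
    classical
    set S := Finset.univ.filter (fun i => b i₀ + 2 ≤ b i) with hSdef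
    set T := Finset.univ.filter (fun i => ¬ (b i₀ + 2 ≤ b i)) with hTdef
    have hST : S.card + T.card = 8 := by
      rw [hSdef, hTdef, Finset.card_filter_add_card_filter_not]
      simp
    have hS1 : 1 ≤ S.card := Finset.card_pos.mpr ⟨i₁, by simp [hSdef]; omega⟩
    have hT1 : 1 ≤ T.card := Finset.card_pos.mpr ⟨i₀, by simp [hTdef]⟩
    have hbig : ∀ i ∈ S, ∀ j ∈ T, (9:ℤ) ≤ (b i - b j)^2 := by
      intro i hi j hj
      have h2i : b i₀ + 2 ≤ b i := by
        have := Finset.mem_filter.mp hi; exact this.2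
      have h3 : b i₀ + 3 ≤ b i := by
        rcases eq_or_lt_of_le h2i with he | hl
        · exfalso
          exact hC ⟨i, i₀, (by intro hh; rw [hh] at he; omega), by omega⟩
        · omega
      have h4 : b j ≤ b i₀ + 1 := by
        have := (Finset.mem_filter.mp hj).2; omega
      have hne2 : b i ≠ b j + 2 := by
        intro hh
        exact hC ⟨i, j, (by intro he; rw [he] at hh; omega), hh⟩
      have : 3 ≤ b i - b j := by omega
      nlinarith
    -- lower bound on total
    have hsplit : ∑ i, ∑ j, (b i - b j)^2
        = ∑ i ∈ S, (∑ j, (b i - b j)^2) + ∑ i ∈ T, (∑ j, (b i - b j)^2) := by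
      rw [hSdef, hTdef, Finset.sum_filter_add_sum_filter_not]
    have hboundS : ∀ i ∈ S, (9 * T.card : ℤ) ≤ ∑ j, (b i - b j)^2 := by
      intro i hi
      calc (9 * T.card : ℤ) = ∑ _j ∈ T, (9:ℤ) := by
            rw [Finset.sum_const]; push_cast; ring
        _ ≤ ∑ j ∈ T, (b i - b j)^2 := Finset.sum_le_sum fun j hj => hbig i hi j hj
        _ ≤ ∑ j, (b i - b j)^2 := Finset.sum_le_sum_of_subset_of_nonneg
            (Finset.subset_univ T) (fun j _ _ => sq_nonneg _)
    have hboundT : ∀ i ∈ T, (9 * S.card : ℤ) ≤ ∑ j, (b i - b j)^2 := by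
      intro i hi
      calc (9 * S.card : ℤ) = ∑ _j ∈ S, (9:ℤ) := by
            rw [Finset.sum_const]; push_cast; ring
        _ ≤ ∑ j ∈ S, (b i - b j)^2 := Finset.sum_le_sum fun j hj => by
            have := hbig j hj i hi
            calc (9:ℤ) ≤ (b j - b i)^2 := this
              _ = (b i - b j)^2 := by ring
        _ ≤ ∑ j, (b i - b j)^2 := Finset.sum_le_sum_of_subset_of_nonneg
            (Finset.subset_univ S) (fun j _ _ => sq_nonneg _)
    have hlow1 : (S.card : ℤ) * (9 * T.card) ≤ ∑ i ∈ S, (∑ j, (b i - b j)^2) := by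
      calc (S.card : ℤ) * (9 * T.card) = ∑ _i ∈ S, (9 * T.card : ℤ) := by
            rw [Finset.sum_const]; push_cast; ring
        _ ≤ _ := Finset.sum_le_sum hboundS
    have hlow2 : (T.card : ℤ) * (9 * S.card) ≤ ∑ i ∈ T, (∑ j, (b i - b j)^2) := by
      calc (T.card : ℤ) * (9 * S.card) = ∑ _i ∈ T, (9 * S.card : ℤ) := by
            rw [Finset.sum_const]; push_cast; ring
        _ ≤ _ := Finset.sum_le_sum hboundT
    have hprod : 7 ≤ S.card * T.card := by nlinarith
    have hprod' : (7:ℤ) ≤ (S.card : ℤ) * T.card := by exact_mod_cast hprod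
    nlinarith [hdsum, hsplit, hlow1, hlow2, sq_nonneg (a - 6)]
  -- two-valued
  have h2val : ∀ i, b i = b i₀ ∨ b i = b i₀ + 1 := fun i => by
    have := hmin i; have := hS i; omega
  -- the two equations
  have e1 : 8 * b i₀ + (∑ i, (b i - b i₀)) = 3 * a - 2 := by
    simp only [Fin.sum_univ_eight] at h1 ⊢
    linarith
  have e2 : 8 * (b i₀)^2 + (2 * b i₀ + 1) * (∑ i, (b i - b i₀)) = a ^ 2 := by
    have hsq : ∀ i, (b i)^2 = (b i₀)^2 + (2 * b i₀ + 1) * (b i - b i₀) := by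
      intro i
      rcases h2val i with h | h <;> rw [h] <;> ring
    have h2' : ∑ i, (b i)^2 = ∑ i, ((b i₀)^2 + (2 * b i₀ + 1) * (b i - b i₀)) :=
      Finset.sum_congr rfl fun i _ => hsq i
    rw [h2] at h2'
    simp only [Fin.sum_univ_eight] at h2' ⊢
    linarith
  have hk0 : 0 ≤ ∑ i, (b i - b i₀) :=
    Finset.sum_nonneg fun i _ => by have := hmin i; omega
  have hk7 : (∑ i, (b i - b i₀)) ≤ 7 := by
    have hle : ∑ i, (b i - b i₀) ≤ ∑ i, (if i = i₀ then 0 else 1) := by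
      apply Finset.sum_le_sum
      intro i _
      rcases eq_or_ne i i₀ with rfl | hne
      · simp
      · rw [if_neg hne]; have := hS i; omega
    rw [sum_if1 i₀ (fun _ => (0:ℤ)) (fun _ => 1)] at hle
    simp only [Fin.sum_univ_eight] at hle ⊢
    omega
  -- solve
  have := arith a (b i₀) (∑ i, (b i - b i₀)) hv1 hv3 hk0 hk7 e1 e2
  rcases this with ⟨ha, hv, hk⟩ | ⟨ha, hv, hk⟩
  · -- a = 10, v = 3, four 3's: find two indices equal to 3
    by_contra hno
    push_neg at hno
    have hall : ∀ i, i ≠ i₀ → b i = b i₀ + 1 := by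
      intro i hi
      rcases h2val i with h | h
      · exfalso
        apply hno i i₀ hi
        rw [h, hv, ha]; ring
      · exact h
    have : ∑ i, (b i - b i₀) = ∑ i, (if i = i₀ then 0 else 1) := by
      apply Finset.sum_congr rfl
      intro i _
      rcases eq_or_ne i i₀ with rfl | hne
      · simp
      · rw [if_neg hne, hall i hne]; ring
    rw [sum_if1 i₀ (fun _ => (0:ℤ)) (fun _ => 1)] at this
    simp only [Fin.sum_univ_eight] at this hk
    omega
  · -- a = 11, v = 3, seven 4's: find a 4, pair with i₀
    have hex : ∃ q, b q = b i₀ + 1 := by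
      by_contra hno
      push_neg at hno
      have : ∑ i, (b i - b i₀) = ∑ i : Fin 8, (0:ℤ) := by
        apply Finset.sum_congr rfl
        intro i _
        rcases h2val i with h | h
        · rw [h]; ring
        · exact absurd h (hno i)
      simp only [Finset.sum_const, smul_zero, Fin.sum_univ_eight] at this hk
      omega
    obtain ⟨q, hq⟩ := hex
    refine ⟨i₀, q, ?_, ?_⟩
    · intro he; rw [← he] at hq; omega
    · rw [hq, hv, ha]; ring

/-- if `a ∈ ℤ`, `b : Fin 8 → ℤ` satisfy `bᵢ ≥ 0`,
`∑ bᵢ = 3a - 2` and `∑ bᵢ² = a²`, then either `a = 1` and `(a, b)` is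
`l - eᵢ` for some `i` (i.e. `b` is the indicator of one index `i`), or
`(a, b)` is the sum of two exceptional classes `ξ₁, ξ₂ ∈ E₈`. -/
theorem square_zero_genus_zero_decomposition (a : ℤ) (b : Fin 8 → ℤ)
    (hb : ∀ i, 0 ≤ b i)
    (h1 : ∑ i, b i = 3 * a - 2) (h2 : ∑ i, (b i) ^ 2 = a ^ 2) :
    (a = 1 ∧ ∃ i, ∀ j, b j = if j = i then 1 else 0) ∨
    (∃ ξ₁ ∈ E8, ∃ ξ₂ ∈ E8, ξ₁ + ξ₂ = (a, b)) := by
  right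
  by_cases hA : ∃ j, b j = 0
  · obtain ⟨j, hj⟩ := hA
    exact caseA a b h1 h2 j hj
  · push_neg at hA
    by_cases hC : ∃ k j, k ≠ j ∧ b k = b j + 2
    · obtain ⟨k, j, hkj, hb2⟩ := hC
      exact caseC a b h1 h2 k j hkj hb2
    · obtain ⟨p, q, hpq, hsum⟩ := keyPair a b hb h1 h2 hA hC
      exact caseE a b h1 h2 p q hpq hsum
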